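/- arXiv:2207.11663 — 6 statements merged into one kernel-verified Lean document; each statement's English description precedes it below -/
import Mathlib

section
/- Let d, r', r'' be positive integers, k ∈ ℤ_{++}^{r'} and l ∈ ℤ_{++}^{r''} (with the conventions k_{r'+1} := 0, l_{r''+1} := 0). Then, in the polynomial ring ℂ[X], the polynomial ∏_{i=1}^{r'+1} ∏_{j=1}^{r''+1} (X − d(i+j−2)/2)_{k_i+l_j} divides the polynomial (X)_{φ₀(k,l),d} · ∏_{i=1}^{r'} ∏_{j=1}^{r''} (X − d(i+j−1)/2)_{k_i+l_j}, where (X)_{φ₀(k,l),d} := ∏_{a=1}^{r'+r''} (X − d(a−1)/2)_{φ₀(k,l)_a}. Equivalently, the rational function (λ)_{φ₀(k,l),d} · C₀^d(λ,k,l) extends to a polynomial in λ. -/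
open Polynomial Finset

/-- `(X - c)_m := ∏_{t=0}^{m-1} (X - c + t)` in `ℂ[X]`. -/
noncomputable def pochPoly (c : ℂ) (m : ℕ) : Polynomial ℂ :=
  ∏ t ∈ Finset.range m, (Polynomial.X - Polynomial.C c + (t : Polynomial ℂ))

/-- `φ₀(k,l)_a := min{k_i + l_j : 1 ≤ i ≤ r'+1, 1 ≤ j ≤ r''+1, i+j = a+1}`. -/
noncomputable def phi0 (r' r'' : ℕ) (k l : ℕ → ℕ) (a : ℕ) : ℕ :=
  sInf {m : ℕ | ∃ i j : ℕ, 1 ≤ i ∧ i ≤ r' + 1 ∧ 1 ≤ j ∧ j ≤ r'' + 1 ∧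
    i + j = a + 1 ∧ m = k i + l j}

/-- The denominator `∏_{i=1}^{r'+1}∏_{j=1}^{r''+1}(X − d(i+j−2)/2)_{k_i+l_j}` of `C₀^d`. -/
noncomputable def denom0 (d r' r'' : ℕ) (k l : ℕ → ℕ) : Polynomial ℂ :=
  ∏ i ∈ Finset.Icc 1 (r' + 1), ∏ j ∈ Finset.Icc 1 (r'' + 1),
    pochPoly ((d : ℂ) * ((i : ℂ) + (j : ℂ) - 2) / 2) (k i + l j)

/-- The numerator `∏_{i=1}^{r'}∏_{j=1}^{r''}(X − d(i+j−1)/2)_{k_i+l_j}` of `C₀^d`. -/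
noncomputable def numer0 (d r' r'' : ℕ) (k l : ℕ → ℕ) : Polynomial ℂ :=
  ∏ i ∈ Finset.Icc 1 r', ∏ j ∈ Finset.Icc 1 r'',
    pochPoly ((d : ℂ) * ((i : ℂ) + (j : ℂ) - 1) / 2) (k i + l j)

/-- The polynomial `(X)_{φ₀(k,l),d} = ∏_{a=1}^{r'+r''}(X − d(a−1)/2)_{φ₀(k,l)_a}`. -/
noncomputable def phiPoly0 (d r' r'' : ℕ) (k l : ℕ → ℕ) : Polynomial ℂ :=
  ∏ a ∈ Finset.Icc 1 (r' + r''),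
    pochPoly ((d : ℂ) * ((a : ℂ) - 1) / 2) (phi0 r' r'' k l a)

/- ### Auxiliary lemmas -/

lemma pochPoly_eq (c : ℂ) (m : ℕ) :
    pochPoly c m
      = ((Multiset.range m).map (fun t : ℕ => X - C (c - (t : ℂ)))).prod := by
  rw [pochPoly, Finset.prod_eq_multiset_prod, Finset.range_val]
  refine congrArg Multiset.prod (Multiset.map_congr rfl fun t _ => ?_)
  simp only [C_sub, Polynomial.C_eq_natCast]
  ring

lemma count_range' (q n : ℕ) :
    Multiset.count q (Multiset.range n) = if q < n then 1 else 0 := by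
  by_cases hq : q < n
  · rw [if_pos hq]
    exact Multiset.count_eq_one_of_mem (Multiset.nodup_range n) (Multiset.mem_range.2 hq)
  · rw [if_neg hq]
    exact Multiset.count_eq_zero_of_notMem (by simpa using hq)

/-- Key divisibility lemma: products of Pochhammer polynomials with the same base `c`
divide each other as soon as the corresponding counts of linear factors do. -/
lemma pochProd_dvd (c : ℂ) (φ : ℕ) (s t : Finset ℕ) (m n : ℕ → ℕ)
    (h : ∀ u : ℕ, (s.filter (fun i => u < m i)).card ≤
      (if u < φ then 1 else 0) + (t.filter (fun i => u < n i)).card) :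
    (∏ i ∈ s, pochPoly c (m i)) ∣ pochPoly c φ * ∏ i ∈ t, pochPoly c (n i) := by
  classical
  set g : ℕ → Polynomial ℂ := fun u => X - C (c - (u : ℂ)) with hg
  have hcount : ∀ (q : ℕ) (w : Finset ℕ) (f : ℕ → ℕ),
      Multiset.count q (w.val.bind (fun i => Multiset.range (f i)))
        = (w.filter (fun i => q < f i)).card := by
    intro q w f
    rw [Multiset.count_bind, Finset.card_filter]
    rw [Finset.sum_eq_multiset_sum]
    exact congrArg Multiset.sum (Multiset.map_congr rfl fun i _ => count_range' q (f i))
  have hprodeq : ∀ (w : Finset ℕ) (f : ℕ → ℕ),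
      ((w.val.bind fun i => Multiset.range (f i)).map g).prod
        = ∏ i ∈ w, pochPoly c (f i) := by
    intro w f
    rw [Multiset.map_bind, Multiset.prod_bind, Finset.prod_eq_multiset_prod]
    exact congrArg Multiset.prod
      (Multiset.map_congr rfl fun i _ => (pochPoly_eq c (f i)).symm)
  have hB : ((Multiset.range φ + t.val.bind fun i => Multiset.range (n i)).map g).prod
      = pochPoly c φ * ∏ i ∈ t, pochPoly c (n i) := by
    rw [Multiset.map_add, Multiset.prod_add, hprodeq t n, pochPoly_eq]
  rw [← hprodeq s m, ← hB]
  refine Multiset.prod_dvd_prod_of_le (Multiset.map_le_map ?_)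
  rw [Multiset.le_iff_count]
  intro q
  rw [Multiset.count_add, hcount q s m, hcount q t n, count_range']
  exact h q

lemma phi0_le {r' r'' : ℕ} {k l : ℕ → ℕ} {a i j : ℕ} (h1 : 1 ≤ i) (h2 : i ≤ r' + 1)
    (h3 : 1 ≤ j) (h4 : j ≤ r'' + 1) (h5 : i + j = a + 1) :
    phi0 r' r'' k l a ≤ k i + l j :=
  Nat.sInf_le ⟨i, j, h1, h2, h3, h4, h5, rfl⟩

lemma phi0_spec (r' r'' : ℕ) (k l : ℕ → ℕ) (a : ℕ) (ha1 : 1 ≤ a)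
    (ha2 : a ≤ r' + r'' + 1) :
    ∃ i j : ℕ, 1 ≤ i ∧ i ≤ r' + 1 ∧ 1 ≤ j ∧ j ≤ r'' + 1 ∧ i + j = a + 1 ∧
      phi0 r' r'' k l a = k i + l j := by
  have h := Nat.sInf_mem
    (s := {m : ℕ | ∃ i j : ℕ, 1 ≤ i ∧ i ≤ r' + 1 ∧ 1 ≤ j ∧ j ≤ r'' + 1 ∧
      i + j = a + 1 ∧ m = k i + l j})
    ⟨k (min (r' + 1) a) + l (a + 1 - min (r' + 1) a),
      min (r' + 1) a, a + 1 - min (r' + 1) a,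
      by omega, by omega, by omega, by omega, by omega, rfl⟩
  exact h

/-- The combinatorial heart of the proof: on each diagonal, the count of
denominator factors exceeding `u` is at most the count of numerator factors
exceeding `u`, plus one if `u < φ₀(k,l)_a`. -/
lemma count_key (r' r'' : ℕ) (k l : ℕ → ℕ)
    (hk : ∀ i j, 1 ≤ i → i ≤ j → j ≤ r' → k j ≤ k i) (hk0 : k (r' + 1) = 0)
    (hl : ∀ i j, 1 ≤ i → i ≤ j → j ≤ r'' → l j ≤ l i) (hl0 : l (r'' + 1) = 0)
    (a : ℕ) (ha1 : 1 ≤ a) (ha2 : a ≤ r' + r'' + 1) (u : ℕ) :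
    ((Finset.Icc (max 1 (a - r'')) (min (r' + 1) a)).filter
        (fun i => u < k i + l (a + 1 - i))).card ≤
      (if u < phi0 r' r'' k l a then 1 else 0) +
      ((Finset.Icc (max 1 (a - r'')) (min r' (a - 1))).filter
        (fun i => u < k i + l (a - i))).card := by
  have kmono : ∀ i i', 1 ≤ i → i ≤ i' → i' ≤ r' + 1 → k i' ≤ k i := by
    intro i i' h1 h2 h3
    rcases Nat.lt_or_ge i' (r' + 1) with h | h
    · exact hk i i' h1 h2 (by omega)
    · have hi' : i' = r' + 1 := by omega
      rw [hi', hk0]; exact Nat.zero_le _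
  have lmono : ∀ j j', 1 ≤ j → j ≤ j' → j' ≤ r'' + 1 → l j' ≤ l j := by
    intro j j' h1 h2 h3
    rcases Nat.lt_or_ge j' (r'' + 1) with h | h
    · exact hl j j' h1 h2 (by omega)
    · have hj' : j' = r'' + 1 := by omega
      rw [hj', hl0]; exact Nat.zero_le _
  by_cases hu : u < phi0 r' r'' k l a
  · rw [if_pos hu]
    have hT : ((Finset.Icc (max 1 (a - r'')) (min r' (a - 1))).filter
        (fun i => u < k i + l (a - i)))
          = Finset.Icc (max 1 (a - r'')) (min r' (a - 1)) := by
      apply Finset.filter_true_of_mem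
      intro i hi
      rw [Finset.mem_Icc] at hi
      have h1 : phi0 r' r'' k l a ≤ k i + l (a + 1 - i) :=
        phi0_le (by omega) (by omega) (by omega) (by omega) (by omega)
      have h2 : l (a + 1 - i) ≤ l (a - i) := lmono _ _ (by omega) (by omega) (by omega)
      omega
    have h3 := Finset.card_filter_le (Finset.Icc (max 1 (a - r'')) (min (r' + 1) a))
      (fun i => u < k i + l (a + 1 - i))
    rw [hT]
    rw [Nat.card_Icc] at h3
    rw [Nat.card_Icc]
    omega
  · rw [if_neg hu, Nat.zero_add]
    obtain ⟨i', j', h1, h2, h3, h4, h5, h6⟩ := phi0_spec r' r'' k l a ha1 ha2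
    have hphile : k i' + l j' ≤ u := by omega
    have hnestar : ∀ i ∈ (Finset.Icc (max 1 (a - r'')) (min (r' + 1) a)).filter
        (fun i => u < k i + l (a + 1 - i)), i ≠ i' := by
      intro i hi hiEq
      rw [Finset.mem_filter, Finset.mem_Icc] at hi
      have hj : a + 1 - i = j' := by omega
      rw [hj] at hi
      rw [hiEq] at hi
      omega
    apply Finset.card_le_card_of_injOn (fun i => if i < i' then i else i - 1)
    · intro i hi
      have hne := hnestar i hi
      rw [Finset.mem_coe, Finset.mem_filter, Finset.mem_Icc] at hi
      obtain ⟨⟨hi0, hi1⟩, hiu⟩ := hi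
      rw [Finset.mem_coe, Finset.mem_filter, Finset.mem_Icc]
      dsimp only
      by_cases hlt : i < i'
      · rw [if_pos hlt]
        have h7 : l (a + 1 - i) ≤ l (a - i) := lmono _ _ (by omega) (by omega) (by omega)
        exact ⟨⟨by omega, by omega⟩, by omega⟩
      · rw [if_neg hlt]
        have hgt : i' < i := by omega
        have h7 : k i ≤ k (i - 1) := kmono (i - 1) i (by omega) (by omega) (by omega)
        have h8 : a - (i - 1) = a + 1 - i := by omega
        refine ⟨⟨by omega, by omega⟩, ?_⟩
        rw [h8]
        omega
    · intro x hx y hy hxy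
      have hxne := hnestar x hx
      have hyne := hnestar y hy
      have hx' := hx; have hy' := hy
      simp only [Finset.coe_filter, Set.mem_setOf_eq, Finset.mem_Icc] at hx' hy'
      simp only at hxy
      by_cases h1 : x < i' <;> by_cases h2 : y < i' <;>
        simp only [if_pos, if_neg, h1, h2, if_true, if_false] at hxy <;> omega

lemma denom0_eq (d r' r'' : ℕ) (k l : ℕ → ℕ) :
    denom0 d r' r'' k l = ∏ a ∈ Finset.Icc 1 (r' + r'' + 1),
      ∏ i ∈ Finset.Icc (max 1 (a - r'')) (min (r' + 1) a),
        pochPoly ((d : ℂ) * ((a : ℂ) - 1) / 2) (k i + l (a + 1 - i)) := by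
  rw [denom0, Finset.prod_sigma', Finset.prod_sigma']
  refine Finset.prod_bij' (fun x _ => (⟨x.1 + x.2 - 1, x.1⟩ : (_ : ℕ) × ℕ))
    (fun y _ => (⟨y.2, y.1 + 1 - y.2⟩ : (_ : ℕ) × ℕ)) ?_ ?_ ?_ ?_ ?_
  · rintro ⟨i, j⟩ hx
    simp only [Finset.mem_sigma, Finset.mem_Icc] at hx ⊢
    omega
  · rintro ⟨a, i⟩ hy
    simp only [Finset.mem_sigma, Finset.mem_Icc] at hy ⊢
    omega
  · rintro ⟨i, j⟩ hx
    simp only [Finset.mem_sigma, Finset.mem_Icc] at hx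
    dsimp only
    have h1 : i + j - 1 + 1 - i = j := by omega
    rw [h1]
  · rintro ⟨a, i⟩ hy
    simp only [Finset.mem_sigma, Finset.mem_Icc] at hy
    dsimp only
    have h1 : i + (a + 1 - i) - 1 = a := by omega
    rw [h1]
  · rintro ⟨i, j⟩ hx
    simp only [Finset.mem_sigma, Finset.mem_Icc] at hx
    dsimp only
    have h1 : i + j - 1 + 1 - i = j := by omega
    have h2 : ((i + j - 1 : ℕ) : ℂ) = (i : ℂ) + (j : ℂ) - 1 := by
      rw [Nat.cast_sub (by omega : 1 ≤ i + j), Nat.cast_add, Nat.cast_one]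
    rw [h1, h2]
    congr 1
    ring

lemma numer0_eq (d r' r'' : ℕ) (k l : ℕ → ℕ) :
    numer0 d r' r'' k l = ∏ a ∈ Finset.Icc 1 (r' + r'' + 1),
      ∏ i ∈ Finset.Icc (max 1 (a - r'')) (min r' (a - 1)),
        pochPoly ((d : ℂ) * ((a : ℂ) - 1) / 2) (k i + l (a - i)) := by
  rw [numer0, Finset.prod_sigma', Finset.prod_sigma']
  refine Finset.prod_bij' (fun x _ => (⟨x.1 + x.2, x.1⟩ : (_ : ℕ) × ℕ))
    (fun y _ => (⟨y.2, y.1 - y.2⟩ : (_ : ℕ) × ℕ)) ?_ ?_ ?_ ?_ ?_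
  · rintro ⟨i, j⟩ hx
    simp only [Finset.mem_sigma, Finset.mem_Icc] at hx ⊢
    omega
  · rintro ⟨a, i⟩ hy
    simp only [Finset.mem_sigma, Finset.mem_Icc] at hy ⊢
    omega
  · rintro ⟨i, j⟩ hx
    simp only [Finset.mem_sigma, Finset.mem_Icc] at hx
    dsimp only
    have h1 : i + j - i = j := by omega
    rw [h1]
  · rintro ⟨a, i⟩ hy
    simp only [Finset.mem_sigma, Finset.mem_Icc] at hy
    dsimp only
    have h1 : i + (a - i) = a := by omega
    rw [h1]
  · rintro ⟨i, j⟩ hx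
    simp only [Finset.mem_sigma, Finset.mem_Icc] at hx
    dsimp only
    have h1 : i + j - i = j := by omega
    have h2 : ((i + j : ℕ) : ℂ) = (i : ℂ) + (j : ℂ) := by push_cast; ring
    rw [h1, h2]

lemma phiPoly0_eq (d r' r'' : ℕ) (k l : ℕ → ℕ) (hk0 : k (r' + 1) = 0)
    (hl0 : l (r'' + 1) = 0) :
    phiPoly0 d r' r'' k l = ∏ a ∈ Finset.Icc 1 (r' + r'' + 1),
      pochPoly ((d : ℂ) * ((a : ℂ) - 1) / 2) (phi0 r' r'' k l a) := by
  rw [phiPoly0]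
  apply Finset.prod_subset
  · intro x hx
    rw [Finset.mem_Icc] at hx ⊢
    omega
  · intro x hx hnx
    rw [Finset.mem_Icc] at hx
    have hx1 : x = r' + r'' + 1 := by
      by_contra hc
      exact hnx (Finset.mem_Icc.2 ⟨hx.1, by omega⟩)
    subst hx1
    have hphi : phi0 r' r'' k l (r' + r'' + 1) = 0 := by
      apply Nat.sInf_eq_zero.mpr
      left
      exact ⟨r' + 1, r'' + 1, by omega, by omega, by omega, by omega, by omega,
        by rw [hk0, hl0]⟩
    rw [hphi]
    simp [pochPoly]

/-- Theorem 5.2 (restricted): `(λ)_{φ₀(k,l),d}·C₀^d(λ,k,l)` is a polynomial in `λ`. -/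
theorem denom_dvd_phiPoly_mul_numer (d r' r'' : ℕ) (hd : 0 < d) (hr' : 0 < r')
    (hr'' : 0 < r'') (k l : ℕ → ℕ)
    (hk : ∀ i j, 1 ≤ i → i ≤ j → j ≤ r' → k j ≤ k i) (hk0 : k (r' + 1) = 0)
    (hl : ∀ i j, 1 ≤ i → i ≤ j → j ≤ r'' → l j ≤ l i) (hl0 : l (r'' + 1) = 0) :
    denom0 d r' r'' k l ∣ phiPoly0 d r' r'' k l * numer0 d r' r'' k l := by
  rw [denom0_eq, numer0_eq, phiPoly0_eq d r' r'' k l hk0 hl0, ← Finset.prod_mul_distrib]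
  apply Finset.prod_dvd_prod_of_dvd
  intro a ha
  rw [Finset.mem_Icc] at ha
  exact pochProd_dvd _ _ _ _ _ _
    (fun u => count_key r' r'' k l hk hk0 hl hl0 a ha.1 ha.2 u)
end

section
/- Let s be a positive integer and let k = (k₁,…,k_s), l = (l₁,…,l_s), n = (n₁,…,n_s) be weakly decreasing tuples of nonnegative integers with k_a ≤ n_a for every a. Suppose there exists a Littlewood–Richardson tableau of shape n/k and weight l, i.e., a function T assigning to each cell (a,b) with 1 ≤ a ≤ s and k_a < b ≤ n_a a value T(a,b) ∈ {1,…,s} such that: (i) each row is weakly increasing: T(a,b) ≤ T(a,b+1) whenever both cells lie in the shape; (ii) each column is strictly increasing: T(a,b) < T(a+1,b) whenever both cells lie in the shape; (iii) for each j ∈ {1,…,s}, exactly l_j cells carry the value j; (iv) (lattice word condition) reading the entries of row 1 from right to left, then row 2 from right to left, and so on down to row s, every initial segment of the resulting word contains, for every j, at least as many occurrences of j as of j+1. Then: (1) n_{s−i−j} ≥ k_{s−i} + l_{s−j} for all integers i, j ≥ 0 with i + j < s; and (2) n_{i+j−1} ≤ k_i + l_j for all integers i, j ≥ 1 with i + j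 ≤ s + 1. -/
open Finset

/-- The number of occurrences of the letter `j` in the initial segment of the
row-reading word (each row read right-to-left, rows from top to bottom) of a skew
tableau `T` of shape `n/k`, ending at the cell `(a,b)` (inclusive). -/
def lrCount (k n : ℕ → ℕ) (T : ℕ → ℕ → ℕ) (j a b : ℕ) : ℕ :=
  (∑ a' ∈ Finset.Icc 1 (a - 1),
      ((Finset.Icc (k a' + 1) (n a')).filter (fun b' => T a' b' = j)).card) +
    ((Finset.Icc b (n a)).filter (fun b' => T a b' = j)).card

/-- The number of cells of value `v` in rows `1..a`. -/
def ncount (k n : ℕ → ℕ) (T : ℕ → ℕ → ℕ) (v a : ℕ) : ℕ :=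
  ∑ a' ∈ Finset.Icc 1 a,
      ((Finset.Icc (k a' + 1) (n a')).filter (fun b' => T a' b' = v)).card

lemma ncount_mono (k n : ℕ → ℕ) (T : ℕ → ℕ → ℕ) (v : ℕ) {a a' : ℕ} (h : a ≤ a') :
    ncount k n T v a ≤ ncount k n T v a' :=
  Finset.sum_le_sum_of_subset (Finset.Icc_subset_Icc_right h)

lemma ncount_succ (k n : ℕ → ℕ) (T : ℕ → ℕ → ℕ) (v a : ℕ) :
    ncount k n T v (a + 1) =
      ncount k n T v a +
        ((Finset.Icc (k (a+1) + 1) (n (a+1))).filter (fun b' => T (a+1) b' = v)).card :=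
  Finset.sum_Icc_succ_top (by omega) _

section Aux

variable {s : ℕ} {k n : ℕ → ℕ} {T : ℕ → ℕ → ℕ}

lemma rowMono (hrow : ∀ a b, 1 ≤ a → a ≤ s → k a < b → b + 1 ≤ n a → T a b ≤ T a (b + 1))
    (a b : ℕ) (ha1 : 1 ≤ a) (has : a ≤ s) (hb : k a < b) :
    ∀ d, b + d ≤ n a → T a b ≤ T a (b + d) := by
  intro d
  induction d with
  | zero => intro _; exact le_rfl
  | succ d ih =>
    intro hd
    exact le_trans (ih (by omega)) (hrow a (b + d) ha1 has (by omega) (by omega))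

lemma colStrict (hk : ∀ i j, 1 ≤ i → i ≤ j → j ≤ s → k j ≤ k i)
    (hn : ∀ i j, 1 ≤ i → i ≤ j → j ≤ s → n j ≤ n i)
    (hcol : ∀ a b, 1 ≤ a → a + 1 ≤ s → k a < b → b ≤ n a →
      k (a + 1) < b → b ≤ n (a + 1) → T a b < T (a + 1) b)
    (a b : ℕ) (ha1 : 1 ≤ a) (hb : k a < b) :
    ∀ d, a + d + 1 ≤ s → b ≤ n (a + d + 1) → T a b < T (a + d + 1) b := by
  intro d
  induction d with
  | zero =>
    intro hs1 hbn
    simp only [Nat.add_zero] at hs1 hbn ⊢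
    have hkk : k (a + 1) ≤ k a := hk a (a+1) ha1 (by omega) hs1
    have hnn : n (a + 1) ≤ n a := hn a (a+1) ha1 (by omega) hs1
    exact hcol a b ha1 hs1 hb (by omega) (by omega) hbn
  | succ d ih =>
    intro hs1 hbn
    simp only [← Nat.add_assoc] at hs1 hbn ⊢
    have hnn : n (a + d + 1 + 1) ≤ n (a + d + 1) :=
      hn (a+d+1) (a+d+1+1) (by omega) (by omega) (by omega)
    have h1 := ih (by omega) (by omega)
    have hk1 : k (a + d + 1) ≤ k a := hk a (a+d+1) ha1 (by omega) (by omega)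
    have hk2 : k (a + d + 1 + 1) ≤ k a := hk a (a+d+1+1) ha1 (by omega) (by omega)
    have h2 := hcol (a+d+1) b (by omega) (by omega) (by omega) (by omega) (by omega) (by omega)
    exact lt_trans h1 h2

lemma colChain (hT : ∀ a b, 1 ≤ a → a ≤ s → k a < b → b ≤ n a → 1 ≤ T a b ∧ T a b ≤ s)
    (hk : ∀ i j, 1 ≤ i → i ≤ j → j ≤ s → k j ≤ k i)
    (hn : ∀ i j, 1 ≤ i → i ≤ j → j ≤ s → n j ≤ n i)
    (hcol : ∀ a b, 1 ≤ a → a + 1 ≤ s → k a < b → b ≤ n a →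
      k (a + 1) < b → b ≤ n (a + 1) → T a b < T (a + 1) b)
    (a b : ℕ) (ha1 : 1 ≤ a) (hb : k a < b) :
    ∀ d, a + d ≤ s → b ≤ n (a + d) → d + 1 ≤ T (a + d) b := by
  intro d
  induction d with
  | zero => intro hs1 hbn; exact (hT a b ha1 hs1 hb hbn).1
  | succ d ih =>
    intro hs1 hbn
    simp only [← Nat.add_assoc] at hs1 hbn ⊢
    have hnn : n (a + d + 1) ≤ n (a + d) := hn (a+d) (a+d+1) (by omega) (by omega) (by omega)
    have h1 := ih (by omega) (by omega)
    have hk1 : k (a + d) ≤ k a := hk a (a+d) ha1 (by omega) (by omega)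
    have hk2 : k (a + d + 1) ≤ k a := hk a (a+d+1) ha1 (by omega) (by omega)
    have h2 := hcol (a+d) b (by omega) (by omega) (by omega) (by omega) (by omega) (by omega)
    show d + 1 + 1 ≤ T (a + d + 1) b
    omega

lemma F1 (hrow : ∀ a b, 1 ≤ a → a ≤ s → k a < b → b + 1 ≤ n a → T a b ≤ T a (b + 1))
    (hlattice : ∀ a b, 1 ≤ a → a ≤ s → k a < b → b ≤ n a → ∀ j, 1 ≤ j →
      lrCount k n T (j + 1) a b ≤ lrCount k n T j a b) :
    ∀ a v, 1 ≤ v → a ≤ s → ncount k n T (v+1) a ≤ ncount k n T v (a - 1) := by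
  intro a
  induction a with
  | zero =>
    intro v hv hs'
    have he : Finset.Icc 1 0 = (∅ : Finset ℕ) := Finset.Icc_eq_empty (by omega)
    simp [ncount, he]
  | succ a ih =>
    intro v hv hs'
    rcases Finset.eq_empty_or_nonempty
        ((Finset.Icc (k (a+1) + 1) (n (a+1))).filter (fun b' => T (a+1) b' = v+1)) with he | hne
    · rw [ncount_succ, he]
      simp only [Finset.card_empty, Nat.add_zero]
      exact le_trans (ih v hv (by omega)) (ncount_mono k n T v (by omega))
    · set R := ((Finset.Icc (k (a+1) + 1) (n (a+1))).filter (fun b' => T (a+1) b' = v+1))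
        with hR
      set b0 := R.min' hne with hb0
      have hmem : b0 ∈ R := R.min'_mem hne
      rw [hR, Finset.mem_filter, Finset.mem_Icc] at hmem
      obtain ⟨⟨hm1, hm2⟩, hm3⟩ := hmem
      have hset : (Finset.Icc b0 (n (a+1))).filter (fun b' => T (a+1) b' = v+1) = R := by
        ext b
        rw [hR]
        simp only [Finset.mem_filter, Finset.mem_Icc]
        constructor
        · rintro ⟨⟨hb1, hb2⟩, hb3⟩
          exact ⟨⟨by omega, hb2⟩, hb3⟩
        · rintro ⟨⟨hb1, hb2⟩, hb3⟩
          have hbR : b ∈ R := by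
            rw [hR]; simp only [Finset.mem_filter, Finset.mem_Icc]; exact ⟨⟨hb1, hb2⟩, hb3⟩
          exact ⟨⟨R.min'_le b hbR, hb2⟩, hb3⟩
      have hzero : (Finset.Icc b0 (n (a+1))).filter (fun b' => T (a+1) b' = v) = ∅ := by
        rw [Finset.filter_eq_empty_iff]
        intro b hbmem
        rw [Finset.mem_Icc] at hbmem
        have hge := rowMono hrow (a+1) b0 (by omega) hs' (by omega) (b - b0) (by omega)
        rw [show b0 + (b - b0) = b from by omega] at hge
        omega
      have hl := hlattice (a+1) b0 (by omega) hs' (by omega) hm2 v hv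
      have e1 : lrCount k n T (v+1) (a+1) b0 =
          ncount k n T (v+1) a +
            ((Finset.Icc b0 (n (a+1))).filter (fun b' => T (a+1) b' = v+1)).card := rfl
      have e2 : lrCount k n T v (a+1) b0 =
          ncount k n T v a +
            ((Finset.Icc b0 (n (a+1))).filter (fun b' => T (a+1) b' = v)).card := rfl
      rw [e1, e2, hset, hzero] at hl
      simp only [Finset.card_empty, Nat.add_zero] at hl
      have e3 := ncount_succ k n T (v+1) a
      rw [← hR] at e3
      show ncount k n T (v+1) (a+1) ≤ ncount k n T v a
      omega

lemma Nchain (hF1 : ∀ a v, 1 ≤ v → a ≤ s → ncount k n T (v+1) a ≤ ncount k n T v (a-1)) :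
    ∀ t v a, 1 ≤ v → a + t ≤ s → ncount k n T (v + t) (a + t) ≤ ncount k n T v a := by
  intro t
  induction t with
  | zero => intro v a _ _; exact le_rfl
  | succ t ih =>
    intro v a hv hs1
    have h1 := hF1 (a + t + 1) (v + t) (by omega) hs1
    rw [show a + t + 1 - 1 = a + t from by omega] at h1
    exact le_trans h1 (ih v a hv (by omega))

lemma valLe (hF1 : ∀ a v, 1 ≤ v → a ≤ s → ncount k n T (v+1) a ≤ ncount k n T v (a-1))
    (a b : ℕ) (ha1 : 1 ≤ a) (has : a ≤ s) (hb : k a < b) (hbn : b ≤ n a) :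
    T a b ≤ a := by
  by_contra hcon
  push_neg at hcon
  have hpos : 1 ≤ ((Finset.Icc (k a + 1) (n a)).filter (fun b' => T a b' = T a b)).card := by
    refine Finset.card_pos.mpr ⟨b, ?_⟩
    simp only [Finset.mem_filter, Finset.mem_Icc]
    exact ⟨⟨by omega, hbn⟩, trivial⟩
  have h1 : 1 ≤ ncount k n T (T a b) a := by
    refine le_trans hpos ?_
    exact Finset.single_le_sum
      (f := fun a' => ((Finset.Icc (k a' + 1) (n a')).filter (fun b' => T a' b' = T a b)).card)
      (fun _ _ => Nat.zero_le _) (Finset.mem_Icc.mpr ⟨ha1, le_rfl⟩)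
  have h2 := Nchain hF1 a (T a b - a) 0 (by omega) (by omega)
  rw [show T a b - a + a = T a b from by omega, show (0:ℕ) + a = a from by omega] at h2
  have h3 : ncount k n T (T a b - a) 0 = 0 := by
    have he : Finset.Icc 1 0 = (∅ : Finset ℕ) := Finset.Icc_eq_empty (by omega)
    simp [ncount, he]
  omega

end Aux

/-- Lemma 3.4: if there is a Littlewood–Richardson tableau of shape `n/k` and
weight `l`, then (1) `n_{s−i−j} ≥ k_{s−i} + l_{s−j}` for `i + j < s`, and
(2) `n_{i+j−1} ≤ k_i + l_j` for `1 ≤ i, j`, `i + j ≤ s + 1`. -/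
theorem lr_tableau_inequalities (s : ℕ) (hs : 0 < s) (k l n : ℕ → ℕ)
    (hk : ∀ i j, 1 ≤ i → i ≤ j → j ≤ s → k j ≤ k i)
    (hl : ∀ i j, 1 ≤ i → i ≤ j → j ≤ s → l j ≤ l i)
    (hn : ∀ i j, 1 ≤ i → i ≤ j → j ≤ s → n j ≤ n i)
    (hkn : ∀ a, 1 ≤ a → a ≤ s → k a ≤ n a)
    (T : ℕ → ℕ → ℕ)
    -- values lie in {1,…,s}
    (hT : ∀ a b, 1 ≤ a → a ≤ s → k a < b → b ≤ n a → 1 ≤ T a b ∧ T a b ≤ s)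
    -- (i) rows weakly increasing
    (hrow : ∀ a b, 1 ≤ a → a ≤ s → k a < b → b + 1 ≤ n a → T a b ≤ T a (b + 1))
    -- (ii) columns strictly increasing
    (hcol : ∀ a b, 1 ≤ a → a + 1 ≤ s → k a < b → b ≤ n a →
      k (a + 1) < b → b ≤ n (a + 1) → T a b < T (a + 1) b)
    -- (iii) weight is l
    (hweight : ∀ j, 1 ≤ j → j ≤ s →
      (∑ a ∈ Finset.Icc 1 s,
        ((Finset.Icc (k a + 1) (n a)).filter (fun b => T a b = j)).card) = l j)
    -- (iv) lattice word condition
    (hlattice : ∀ a b, 1 ≤ a → a ≤ s → k a < b → b ≤ n a → ∀ j, 1 ≤ j →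
      lrCount k n T (j + 1) a b ≤ lrCount k n T j a b) :
    (∀ i j : ℕ, i + j < s → k (s - i) + l (s - j) ≤ n (s - i - j)) ∧
    (∀ i j : ℕ, 1 ≤ i → 1 ≤ j → i + j ≤ s + 1 → n (i + j - 1) ≤ k i + l j) := by
  have hF1 := F1 hrow hlattice
  constructor
  · -- Part (1)
    intro i j hij
    have h1 : ncount k n T (s - j) s = l (s - j) := hweight (s - j) (by omega) (by omega)
    have h2 := Nchain hF1 i (s - i - j) (s - i) (by omega) (by omega)
    rw [show s - i - j + i = s - j from by omega, show s - i + i = s from by omega] at h2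
    have hdisj : ∀ a1 ∈ Finset.Icc 1 (s - i), ∀ a2 ∈ Finset.Icc 1 (s - i), a1 ≠ a2 →
        Disjoint ((Finset.Icc (k a1 + 1) (n a1)).filter (fun b' => T a1 b' = s - i - j))
          ((Finset.Icc (k a2 + 1) (n a2)).filter (fun b' => T a2 b' = s - i - j)) := by
      have key : ∀ a1 a2, 1 ≤ a1 → a1 < a2 → a2 ≤ s →
          Disjoint ((Finset.Icc (k a1 + 1) (n a1)).filter (fun b' => T a1 b' = s - i - j))
            ((Finset.Icc (k a2 + 1) (n a2)).filter (fun b' => T a2 b' = s - i - j)) := by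
        intro a1 a2 h1' h2' h3'
        rw [Finset.disjoint_left]
        intro b hb1 hb2
        simp only [Finset.mem_filter, Finset.mem_Icc] at hb1 hb2
        obtain ⟨d, rfl⟩ : ∃ d, a2 = a1 + d + 1 := ⟨a2 - a1 - 1, by omega⟩
        have hlt := colStrict hk hn hcol a1 b h1' (by omega) d (by omega) (by omega)
        omega
      intro a1 ha1 a2 ha2 hne
      rw [Finset.mem_Icc] at ha1 ha2
      rcases Nat.lt_or_ge a1 a2 with h | h
      · exact key a1 a2 ha1.1 h (by omega)
      · exact (key a2 a1 ha2.1 (by omega) (by omega)).symm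
    have hcard : ncount k n T (s - i - j) (s - i)
        = ((Finset.Icc 1 (s - i)).biUnion
            (fun a => (Finset.Icc (k a + 1) (n a)).filter (fun b' => T a b' = s - i - j))).card :=
      (Finset.card_biUnion hdisj).symm
    have hsub : ((Finset.Icc 1 (s - i)).biUnion
          (fun a => (Finset.Icc (k a + 1) (n a)).filter (fun b' => T a b' = s - i - j)))
        ⊆ Finset.Icc (k (s - i) + 1) (n (s - i - j)) := by
      intro b hb
      rw [Finset.mem_biUnion] at hb
      obtain ⟨a, ha, hbF⟩ := hb
      rw [Finset.mem_Icc] at ha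
      simp only [Finset.mem_filter, Finset.mem_Icc] at hbF
      have hva := valLe hF1 a b ha.1 (by omega) (by omega) hbF.1.2
      rw [hbF.2] at hva
      have hk1 : k (s - i) ≤ k a := hk a (s - i) ha.1 ha.2 (by omega)
      have hn1 : n a ≤ n (s - i - j) := hn (s - i - j) a (by omega) hva (by omega)
      rw [Finset.mem_Icc]
      omega
    have h3 := Finset.card_le_card hsub
    rw [← hcard, Nat.card_Icc] at h3
    have hkn1 : k (s - i) ≤ n (s - i) := hkn (s - i) (by omega) (by omega)
    have hn2 : n (s - i) ≤ n (s - i - j) := hn (s - i - j) (s - i) (by omega) (by omega) (by omega)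
    omega
  · -- Part (2)
    intro i j hi hj hij
    by_contra hcon
    push_neg at hcon
    set a0 := i + j - 1 with ha0
    have tail : ∀ d w, 1 ≤ w → s + 1 ≤ w + d →
        (∑ v ∈ Finset.Icc w s,
            ((Finset.Icc (k a0 + 1) (n a0)).filter (fun b' => T a0 b' = v)).card)
          ≤ ncount k n T w a0 := by
      intro d
      induction d with
      | zero =>
        intro w hw1 hw2
        rw [Finset.Icc_eq_empty (by omega)]
        simp
      | succ d ih =>
        intro w hw1 hw2
        by_cases hc : s + 1 ≤ w + d
        · exact ih w hw1 hc
        · have hws : w ≤ s := by omega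
          rw [Finset.Icc_eq_cons_Ioc hws, Finset.sum_cons, ← Finset.Icc_add_one_left_eq_Ioc]
          have h5 := ih (w+1) (by omega) (by omega)
          have h6 := hF1 a0 w hw1 (by omega)
          have h7 : ncount k n T w a0 = ncount k n T w (a0 - 1) +
              ((Finset.Icc (k a0 + 1) (n a0)).filter (fun b' => T a0 b' = w)).card := by
            conv_lhs => rw [show a0 = (a0 - 1) + 1 from by omega]
            rw [ncount_succ, show a0 - 1 + 1 = a0 from by omega]
          omega
    have h8 := tail (s + 1) j hj (by omega)
    have h9 : ncount k n T j a0 ≤ ncount k n T j s := ncount_mono k n T j (by omega)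
    have h10 : ncount k n T j s = l j := hweight j hj (by omega)
    have hsub : Finset.Icc (k i + 1) (n a0) ⊆ (Finset.Icc j s).biUnion
        (fun v => (Finset.Icc (k a0 + 1) (n a0)).filter (fun b' => T a0 b' = v)) := by
      intro b hb
      rw [Finset.mem_Icc] at hb
      have hka : k a0 ≤ k i := hk i a0 hi (by omega) (by omega)
      have hTle := hT a0 b (by omega) (by omega) (by omega) hb.2
      have hTge : j ≤ T a0 b := by
        have e : i + (j - 1) = a0 := by omega
        have hcc := colChain hT hk hn hcol i b hi (by omega) (j - 1) (by omega)
            (by rw [e]; exact hb.2)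
        rw [e] at hcc
        omega
      rw [Finset.mem_biUnion]
      refine ⟨T a0 b, Finset.mem_Icc.mpr ⟨hTge, hTle.2⟩, ?_⟩
      simp only [Finset.mem_filter, Finset.mem_Icc]
      exact ⟨⟨by omega, hb.2⟩, trivial⟩
    have h11 := le_trans (Finset.card_le_card hsub) Finset.card_biUnion_le
    rw [Nat.card_Icc] at h11
    omega
end

section
/- Let x₁, x₂ ∈ M₃(ℂ) be 3×3 complex matrices with x₁ᵀ = −x₁ (alternating) and x₂ᵀ = x₂ (symmetric). Then det(x₁ + x₂) = det(x₂) + tr(x₂ · adj(x₁)), where adj denotes the adjugate matrix and tr the trace. -/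
open Matrix

/-- Lemma 7.1(3) for `(𝔭⁺,𝔭₁⁺,𝔭₂⁺) = (M(3,ℂ), Alt(3,ℂ), Sym(3,ℂ))`: for `x₁`
alternating and `x₂` symmetric, `det(x₁+x₂) = det x₂ + tr(x₂·adj(x₁))`. -/
theorem det_alt_add_sym (x₁ x₂ : Matrix (Fin 3) (Fin 3) ℂ)
    (h₁ : x₁ᵀ = -x₁) (h₂ : x₂ᵀ = x₂) :
    (x₁ + x₂).det = x₂.det + (x₂ * x₁.adjugate).trace := by
  have e₁ : ∀ i j, x₁ j i = -x₁ i j := fun i j => congrFun (congrFun h₁ i) j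
  have e₂ : ∀ i j, x₂ j i = x₂ i j := fun i j => congrFun (congrFun h₂ i) j
  simp only [det_fin_three, trace_fin_three, adjugate_fin_three, mul_apply,
    Fin.sum_univ_three, Matrix.add_apply, of_apply, Matrix.cons_val', Matrix.cons_val_zero,
    Matrix.cons_val_one, Matrix.head_cons, Matrix.empty_val', Matrix.cons_val_fin_one,
    Matrix.head_fin_const, Matrix.cons_val_two, Matrix.tail_cons]
  rw [e₁ 0 1, e₁ 0 2, e₁ 1 2, e₂ 0 1, e₂ 0 2, e₂ 1 2,
    show x₁ 0 0 = 0 by have := e₁ 0 0; linear_combination this/2,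
    show x₁ 1 1 = 0 by have := e₁ 1 1; linear_combination this/2,
    show x₁ 2 2 = 0 by have := e₁ 2 2; linear_combination this/2]
  ring
end

section
/- Let d, r, k be positive integers, let i, j ∈ {1,…,r} satisfy i + j ≥ r + 1, and let a₁, a₂ ∈ {1,…,k} satisfy a₁ + a₂ ≥ k + 1. Set λ := d(i−1)/2 + 1 − a₁ and μ := d(j−1)/2 + 1 − a₂. Then for every weakly decreasing tuple of integers m = (m₁,…,m_r) with k ≥ m₁ ≥ m₂ ≥ ⋯ ≥ m_r ≥ 0, one has ∏_{p=1}^{r} (−λ − k + 1 + d(r−p)/2)_{m_p} · ∏_{q=1}^{r} (−μ − k + 1 + d(q−1)/2)_{k−m_q} = 0. -/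
open Finset

lemma pochC_aux_eq_zero {n mm : ℕ} (h : n < mm) :
    (∏ t ∈ Finset.range mm, ((-(n : ℂ)) + (t : ℂ))) = 0 :=
  Finset.prod_eq_zero (Finset.mem_range.mpr h) (by simp)

/-- The Pochhammer symbol `(z)_m := ∏_{t=0}^{m−1}(z+t)` in `ℂ`. -/
noncomputable def pochC (z : ℂ) (m : ℕ) : ℂ :=
  ∏ t ∈ Finset.range m, (z + (t : ℂ))

/-- Section 8.3: vanishing of the coefficients `F_m(λ,μ)` of the Rankin–Cohen-type
polynomial `RC^{𝔫⁺}_{λ,μ,k}` at `(λ,μ) ∈ Z^{k,d}_{i,j}` with `i + j ≥ r + 1`. -/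
theorem coefficient_vanishes (d r k : ℕ) (hd : 0 < d) (hr : 0 < r) (hk : 0 < k)
    (i j : ℕ) (hi1 : 1 ≤ i) (hi2 : i ≤ r) (hj1 : 1 ≤ j) (hj2 : j ≤ r)
    (hij : r + 1 ≤ i + j)
    (a₁ a₂ : ℕ) (ha₁1 : 1 ≤ a₁) (ha₁2 : a₁ ≤ k) (ha₂1 : 1 ≤ a₂) (ha₂2 : a₂ ≤ k)
    (ha : k + 1 ≤ a₁ + a₂)
    (lam mu : ℂ)
    (hlam : lam = (d : ℂ) * ((i : ℂ) - 1) / 2 + 1 - (a₁ : ℂ))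
    (hmu : mu = (d : ℂ) * ((j : ℂ) - 1) / 2 + 1 - (a₂ : ℂ))
    (m : ℕ → ℕ) (hm1 : m 1 ≤ k)
    (hmdec : ∀ p q, 1 ≤ p → p ≤ q → q ≤ r → m q ≤ m p) :
    (∏ p ∈ Finset.Icc 1 r,
        pochC (-lam - (k : ℂ) + 1 + (d : ℂ) * ((r : ℂ) - (p : ℂ)) / 2) (m p)) *
      (∏ q ∈ Finset.Icc 1 r,
        pochC (-mu - (k : ℂ) + 1 + (d : ℂ) * ((q : ℂ) - 1) / 2) (k - m q)) = 0 := by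
  by_cases hcase : k - a₁ + 1 ≤ m (r + 1 - i)
  · -- the first product has a vanishing factor at p = r+1-i
    apply mul_eq_zero.mpr; left
    apply Finset.prod_eq_zero (i := r + 1 - i) (Finset.mem_Icc.mpr ⟨by omega, by omega⟩)
    have hbase : -lam - (k : ℂ) + 1 + (d : ℂ) * ((r : ℂ) - ((r + 1 - i : ℕ) : ℂ)) / 2
        = -((k - a₁ : ℕ) : ℂ) := by
      subst hlam
      push_cast [Nat.cast_sub (show i ≤ r + 1 by omega), Nat.cast_sub ha₁2]
      ring
    rw [pochC, hbase]
    exact pochC_aux_eq_zero (by omega)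
  · -- then m j ≤ m (r+1-i) ≤ k - a₁ < a₂, so the second product vanishes at q = j
    have hmj : m j ≤ m (r + 1 - i) := hmdec _ _ (by omega) (by omega) hj2
    apply mul_eq_zero.mpr; right
    apply Finset.prod_eq_zero (i := j) (Finset.mem_Icc.mpr ⟨hj1, hj2⟩)
    have hbase : -mu - (k : ℂ) + 1 + (d : ℂ) * ((j : ℂ) - 1) / 2
        = -((k - a₂ : ℕ) : ℂ) := by
      subst hmu
      push_cast [Nat.cast_sub ha₂2]
      ring
    rw [pochC, hbase]
    exact pochC_aux_eq_zero (by omega)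
end

section
/- Let d and r₂ be positive integers, k ∈ ℤ_{++}^{r₂} (with k_{r₂+1} := 0), and write |k| := k₁ + ⋯ + k_{r₂}. Then the following identity of rational functions of λ holds (equivalently, the polynomial identity in ℂ[X] obtained by cross-multiplying all denominators): 2^{|k|} · [∏_{1≤i<j≤r₂}(2λ − 1 − d(i+j−1))_{k_i+k_j} / ∏_{1≤i<j≤r₂+1}(2λ − 1 − d(i+j−2))_{k_i+k_j}] · [∏_{i=1}^{r₂}(λ − 1/2 − d(2i−1)/2)_{k_i} / ∏_{i=1}^{r₂}(λ − d(i−1))_{k_i}] = [∏_{1≤i<j≤r₂}(λ − d(i+j−1)/2)_{⌊(k_i+k_j)/2⌋} · ∏_{1≤i≤j≤r₂}(λ − 1/2 − d(i+j−1)/2)_{⌈(k_i+k_j)/2⌉}] / [∏_{1≤i≤j≤r₂+1}(λ − d(i+j−2)/2)_{⌊(k_i+k_j)/2⌋} · ∏_{1≤i<j≤r₂+1}(λ − 1/2 − d(i+j−2)/2)_{⌈(k_i+k_j)/2⌉}]. -/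
open Polynomial Finset

/-- `(p)_m := ∏_{t=0}^{m−1}(p + t)` for a polynomial `p ∈ ℂ[X]`. -/
noncomputable def pochOf (p : Polynomial ℂ) (m : ℕ) : Polynomial ℂ :=
  ∏ t ∈ Finset.range m, (p + (t : Polynomial ℂ))

/-- Scalar Pochhammer symbol on ℂ. -/
noncomputable def poch (a : ℂ) (m : ℕ) : ℂ := ∏ t ∈ Finset.range m, (a + t)

lemma poch_zero (a : ℂ) : poch a 0 = 1 := by simp [poch]

lemma poch_succ (a : ℂ) (m : ℕ) : poch a (m + 1) = poch a m * (a + m) := by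
  simp [poch, Finset.prod_range_succ]

lemma poch_add_two (a : ℂ) (m : ℕ) :
    poch a (m + 2) = poch a m * ((a + m) * (a + (m + 1))) := by
  simp [poch, Finset.prod_range_succ]
  ring

lemma poch_congr {a b : ℂ} (m : ℕ) (h : a = b) : poch a m = poch b m := by rw [h]

lemma eval_pochOf (x : ℂ) (p : Polynomial ℂ) (m : ℕ) :
    (pochOf p m).eval x = poch (p.eval x) m := by
  simp [pochOf, poch, Polynomial.eval_prod]

/-- Key identity: `(2μ−1)_m = 2^m (μ)_{⌊m/2⌋} (μ−1/2)_{⌈m/2⌉}` with `μ = x − c/2`. -/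
lemma poch_key (x c : ℂ) (m : ℕ) :
    poch (2 * x - (1 + c)) m =
      2 ^ m * (poch (x - c / 2) (m / 2) * poch (x - (1 / 2 + c / 2)) ((m + 1) / 2)) := by
  induction m using Nat.twoStepInduction with
  | zero => simp [poch]
  | one =>
      simp [poch]
      ring
  | more m ih _ =>
      have h1 : (m + 2) / 2 = m / 2 + 1 := by omega
      have h2 : (m + 2 + 1) / 2 = (m + 1) / 2 + 1 := by omega
      rw [poch_add_two, ih, h1, h2, poch_succ, poch_succ]
      rcases Nat.even_or_odd m with ⟨s, hs⟩ | ⟨s, hs⟩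
      · subst hs
        have e1 : (s + s) / 2 = s := by omega
        have e2 : (s + s + 1) / 2 = s := by omega
        rw [e1, e2]
        push_cast
        ring
      · subst hs
        have e1 : (2 * s + 1) / 2 = s := by omega
        have e2 : (2 * s + 1 + 1) / 2 = s + 1 := by omega
        rw [e1, e2]
        push_cast
        ring

lemma prod_Icc_bot {M : Type*} [CommMonoid M] {a b : ℕ} (h : a ≤ b) (f : ℕ → M) :
    ∏ j ∈ Finset.Icc a b, f j = f a * ∏ j ∈ Finset.Icc (a + 1) b, f j := by
  have hs : Finset.Icc a b = insert a (Finset.Icc (a + 1) b) := by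
    ext j; simp [Finset.mem_Icc, Finset.mem_insert]; omega
  rw [hs, Finset.prod_insert (by simp [Finset.mem_Icc])]

lemma sum_split (r₂ : ℕ) (k : ℕ → ℕ) (hk0 : k (r₂ + 1) = 0) :
    ∑ i ∈ Finset.Icc 1 (r₂ + 1), ∑ j ∈ Finset.Icc (i + 1) (r₂ + 1), (k i + k j)
      = (∑ i ∈ Finset.Icc 1 r₂, k i) +
        ∑ i ∈ Finset.Icc 1 r₂, ∑ j ∈ Finset.Icc (i + 1) r₂, (k i + k j) := by
  rw [Finset.sum_Icc_succ_top (by omega)]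
  have hstep : ∀ i ∈ Finset.Icc 1 r₂,
      ∑ j ∈ Finset.Icc (i + 1) (r₂ + 1), (k i + k j)
        = (∑ j ∈ Finset.Icc (i + 1) r₂, (k i + k j)) + k i := by
    intro i hi
    simp only [Finset.mem_Icc] at hi
    rw [Finset.sum_Icc_succ_top (by omega), hk0]
    simp
  rw [Finset.sum_congr rfl hstep, Finset.sum_add_distrib]
  have hempty : ∑ j ∈ Finset.Icc (r₂ + 1 + 1) (r₂ + 1), (k (r₂ + 1) + k j) = 0 := by
    rw [Finset.Icc_eq_empty (by omega)]; simp
  rw [hempty]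
  omega

/-- The scalar (evaluated) form of the main identity. -/
lemma main_c (d r₂ : ℕ) (k : ℕ → ℕ) (hk0 : k (r₂ + 1) = 0) (x : ℂ) :
    (2 : ℂ) ^ (∑ i ∈ Finset.Icc 1 r₂, k i) *
      (∏ i ∈ Finset.Icc 1 r₂, ∏ j ∈ Finset.Icc (i + 1) r₂,
        poch (2 * x - (1 + (d : ℂ) * ((i : ℂ) + (j : ℂ) - 1))) (k i + k j)) *
      (∏ i ∈ Finset.Icc 1 r₂,
        poch (x - (1 / 2 + (d : ℂ) * (2 * (i : ℂ) - 1) / 2)) (k i)) *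
      ((∏ i ∈ Finset.Icc 1 (r₂ + 1), ∏ j ∈ Finset.Icc i (r₂ + 1),
        poch (x - (d : ℂ) * ((i : ℂ) + (j : ℂ) - 2) / 2) ((k i + k j) / 2)) *
       ∏ i ∈ Finset.Icc 1 (r₂ + 1), ∏ j ∈ Finset.Icc (i + 1) (r₂ + 1),
        poch (x - (1 / 2 + (d : ℂ) * ((i : ℂ) + (j : ℂ) - 2) / 2)) ((k i + k j + 1) / 2)) =
    ((∏ i ∈ Finset.Icc 1 r₂, ∏ j ∈ Finset.Icc (i + 1) r₂,
        poch (x - (d : ℂ) * ((i : ℂ) + (j : ℂ) - 1) / 2) ((k i + k j) / 2)) *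
       ∏ i ∈ Finset.Icc 1 r₂, ∏ j ∈ Finset.Icc i r₂,
        poch (x - (1 / 2 + (d : ℂ) * ((i : ℂ) + (j : ℂ) - 1) / 2)) ((k i + k j + 1) / 2)) *
      (∏ i ∈ Finset.Icc 1 (r₂ + 1), ∏ j ∈ Finset.Icc (i + 1) (r₂ + 1),
        poch (2 * x - (1 + (d : ℂ) * ((i : ℂ) + (j : ℂ) - 2))) (k i + k j)) *
      (∏ i ∈ Finset.Icc 1 r₂,
        poch (x - (d : ℂ) * ((i : ℂ) - 1)) (k i)) := by
  -- T1: split the LHS double Pochhammer product via poch_key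
  have T1 : (∏ i ∈ Finset.Icc 1 r₂, ∏ j ∈ Finset.Icc (i + 1) r₂,
        poch (2 * x - (1 + (d : ℂ) * ((i : ℂ) + (j : ℂ) - 1))) (k i + k j))
      = (2 : ℂ) ^ (∑ i ∈ Finset.Icc 1 r₂, ∑ j ∈ Finset.Icc (i + 1) r₂, (k i + k j)) *
        ((∏ i ∈ Finset.Icc 1 r₂, ∏ j ∈ Finset.Icc (i + 1) r₂,
            poch (x - (d : ℂ) * ((i : ℂ) + (j : ℂ) - 1) / 2) ((k i + k j) / 2)) *
         (∏ i ∈ Finset.Icc 1 r₂, ∏ j ∈ Finset.Icc (i + 1) r₂,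
            poch (x - (1 / 2 + (d : ℂ) * ((i : ℂ) + (j : ℂ) - 1) / 2)) ((k i + k j + 1) / 2))) := by
    rw [Finset.prod_congr rfl fun (i : ℕ) _ => Finset.prod_congr rfl fun (j : ℕ) _ =>
      poch_key x ((d : ℂ) * ((i : ℂ) + (j : ℂ) - 1)) (k i + k j)]
    simp only [Finset.prod_mul_distrib, Finset.prod_pow_eq_pow_sum]
  -- T4: split the RHS double Pochhammer product via poch_key
  have T4 : (∏ i ∈ Finset.Icc 1 (r₂ + 1), ∏ j ∈ Finset.Icc (i + 1) (r₂ + 1),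
        poch (2 * x - (1 + (d : ℂ) * ((i : ℂ) + (j : ℂ) - 2))) (k i + k j))
      = (2 : ℂ) ^ (∑ i ∈ Finset.Icc 1 (r₂ + 1), ∑ j ∈ Finset.Icc (i + 1) (r₂ + 1), (k i + k j)) *
        ((∏ i ∈ Finset.Icc 1 (r₂ + 1), ∏ j ∈ Finset.Icc (i + 1) (r₂ + 1),
            poch (x - (d : ℂ) * ((i : ℂ) + (j : ℂ) - 2) / 2) ((k i + k j) / 2)) *
         (∏ i ∈ Finset.Icc 1 (r₂ + 1), ∏ j ∈ Finset.Icc (i + 1) (r₂ + 1),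
            poch (x - (1 / 2 + (d : ℂ) * ((i : ℂ) + (j : ℂ) - 2) / 2)) ((k i + k j + 1) / 2))) := by
    rw [Finset.prod_congr rfl fun (i : ℕ) _ => Finset.prod_congr rfl fun (j : ℕ) _ =>
      poch_key x ((d : ℂ) * ((i : ℂ) + (j : ℂ) - 2)) (k i + k j)]
    simp only [Finset.prod_mul_distrib, Finset.prod_pow_eq_pow_sum]
  -- T2: extract the diagonal from the i ≤ j ≤ r₂ product
  have T2 : (∏ i ∈ Finset.Icc 1 r₂, ∏ j ∈ Finset.Icc i r₂,
        poch (x - (1 / 2 + (d : ℂ) * ((i : ℂ) + (j : ℂ) - 1) / 2)) ((k i + k j + 1) / 2))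
      = (∏ i ∈ Finset.Icc 1 r₂,
          poch (x - (1 / 2 + (d : ℂ) * (2 * (i : ℂ) - 1) / 2)) (k i)) *
        (∏ i ∈ Finset.Icc 1 r₂, ∏ j ∈ Finset.Icc (i + 1) r₂,
          poch (x - (1 / 2 + (d : ℂ) * ((i : ℂ) + (j : ℂ) - 1) / 2)) ((k i + k j + 1) / 2)) := by
    rw [← Finset.prod_mul_distrib]
    apply Finset.prod_congr rfl
    intro i hi
    simp only [Finset.mem_Icc] at hi
    rw [prod_Icc_bot hi.2]
    congr 1
    have hm : (k i + k i + 1) / 2 = k i := by omega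
    rw [hm]
    exact poch_congr _ (by ring)
  -- T3: extract the diagonal from the i ≤ j ≤ r₂+1 product
  have T3 : (∏ i ∈ Finset.Icc 1 (r₂ + 1), ∏ j ∈ Finset.Icc i (r₂ + 1),
        poch (x - (d : ℂ) * ((i : ℂ) + (j : ℂ) - 2) / 2) ((k i + k j) / 2))
      = (∏ i ∈ Finset.Icc 1 r₂, poch (x - (d : ℂ) * ((i : ℂ) - 1)) (k i)) *
        (∏ i ∈ Finset.Icc 1 (r₂ + 1), ∏ j ∈ Finset.Icc (i + 1) (r₂ + 1),
          poch (x - (d : ℂ) * ((i : ℂ) + (j : ℂ) - 2) / 2) ((k i + k j) / 2)) := by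
    have hstep : ∀ i ∈ Finset.Icc 1 (r₂ + 1),
        (∏ j ∈ Finset.Icc i (r₂ + 1),
          poch (x - (d : ℂ) * ((i : ℂ) + (j : ℂ) - 2) / 2) ((k i + k j) / 2))
        = poch (x - (d : ℂ) * ((i : ℂ) - 1)) (k i) *
          ∏ j ∈ Finset.Icc (i + 1) (r₂ + 1),
            poch (x - (d : ℂ) * ((i : ℂ) + (j : ℂ) - 2) / 2) ((k i + k j) / 2) := by
      intro i hi
      simp only [Finset.mem_Icc] at hi
      rw [prod_Icc_bot hi.2]
      congr 1
      have hm : (k i + k i) / 2 = k i := by omega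
      rw [hm]
      exact poch_congr _ (by ring)
    rw [Finset.prod_congr rfl hstep, Finset.prod_mul_distrib]
    congr 1
    rw [Finset.prod_Icc_succ_top (by omega), hk0, poch_zero, mul_one]
  rw [T1, T2, T3, T4, sum_split r₂ k hk0, pow_add]
  ring

/-- Theorem 6.1, case ε₂ = 2: equality of the two closed-form expressions (const2)
for `C₂^{d,2d}(λ,k)`, stated as the polynomial identity in `λ` obtained by
cross-multiplying all denominators. -/
theorem const2_two_expressions (d r₂ : ℕ) (hd : 0 < d) (hr₂ : 0 < r₂)
    (k : ℕ → ℕ) (hk : ∀ i j, 1 ≤ i → i ≤ j → j ≤ r₂ → k j ≤ k i)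
    (hk0 : k (r₂ + 1) = 0) :
    Polynomial.C ((2 : ℂ) ^ (∑ i ∈ Finset.Icc 1 r₂, k i)) *
      (∏ i ∈ Finset.Icc 1 r₂, ∏ j ∈ Finset.Icc (i + 1) r₂,
        pochOf (Polynomial.C 2 * Polynomial.X -
          Polynomial.C (1 + (d : ℂ) * ((i : ℂ) + (j : ℂ) - 1))) (k i + k j)) *
      (∏ i ∈ Finset.Icc 1 r₂,
        pochOf (Polynomial.X -
          Polynomial.C (1 / 2 + (d : ℂ) * (2 * (i : ℂ) - 1) / 2)) (k i)) *
      ((∏ i ∈ Finset.Icc 1 (r₂ + 1), ∏ j ∈ Finset.Icc i (r₂ + 1),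
        pochOf (Polynomial.X -
          Polynomial.C ((d : ℂ) * ((i : ℂ) + (j : ℂ) - 2) / 2)) ((k i + k j) / 2)) *
       ∏ i ∈ Finset.Icc 1 (r₂ + 1), ∏ j ∈ Finset.Icc (i + 1) (r₂ + 1),
        pochOf (Polynomial.X -
          Polynomial.C (1 / 2 + (d : ℂ) * ((i : ℂ) + (j : ℂ) - 2) / 2)) ((k i + k j + 1) / 2)) =
    ((∏ i ∈ Finset.Icc 1 r₂, ∏ j ∈ Finset.Icc (i + 1) r₂,
        pochOf (Polynomial.X -
          Polynomial.C ((d : ℂ) * ((i : ℂ) + (j : ℂ) - 1) / 2)) ((k i + k j) / 2)) *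
       ∏ i ∈ Finset.Icc 1 r₂, ∏ j ∈ Finset.Icc i r₂,
        pochOf (Polynomial.X -
          Polynomial.C (1 / 2 + (d : ℂ) * ((i : ℂ) + (j : ℂ) - 1) / 2)) ((k i + k j + 1) / 2)) *
      (∏ i ∈ Finset.Icc 1 (r₂ + 1), ∏ j ∈ Finset.Icc (i + 1) (r₂ + 1),
        pochOf (Polynomial.C 2 * Polynomial.X -
          Polynomial.C (1 + (d : ℂ) * ((i : ℂ) + (j : ℂ) - 2))) (k i + k j)) *
      (∏ i ∈ Finset.Icc 1 r₂,
        pochOf (Polynomial.X - Polynomial.C ((d : ℂ) * ((i : ℂ) - 1))) (k i)) := by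
  apply Polynomial.funext
  intro x
  simp only [eval_mul, Polynomial.eval_prod, eval_pochOf, eval_sub, eval_X, eval_C]
  exact main_c d r₂ k hk0 x
end

section
/- Let d and r be positive integers with r ≥ 1 and k ∈ ℤ_{++}^{r} (with k_{r+1} := 0). Then the following identity of rational functions of ν holds (equivalently, the polynomial identity obtained by cross-multiplying denominators): C̃^d(ν, (k₁,…,k_r)) = C̃^d(ν + 2k_r, (k₁−k_r, …, k_{r−1}−k_r)) · ∏_{i=1}^{r}(ν + k_i − 1 − d(i+r−2)/2)_{k_r}, where on the right-hand side C̃^d is formed for the (r−1)-tuple (k₁−k_r,…,k_{r−1}−k_r) ∈ ℤ_{++}^{r−1}. Explicitly: ∏_{1≤i≤j≤r}(ν − 1 − d(i+j−2)/2)_{k_i+k_j} / ∏_{1≤i<j≤r+1}(ν − 1 − d(i+j−3)/2)_{k_i+k_j} = [∏_{1≤i≤j≤r−1}(ν + 2k_r − 1 − d(i+j−2)/2)_{k_i+k_j−2k_r} / ∏_{1≤i<j≤r}(ν + 2k_r − 1 − d(i+j−3)/2)_{k_i+k_j−2k_r}] · ∏_{i=1}^{r}(ν + k_i − 1 − d(i+r−2)/2)_{k_r}.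 -/
open Polynomial Finset

lemma pochOf_add (p : Polynomial ℂ) (a b : ℕ) :
    pochOf p (a + b) = pochOf p a * pochOf (p + (a : Polynomial ℂ)) b := by
  unfold pochOf
  rw [Finset.prod_range_add]
  congr 1
  refine Finset.prod_congr rfl fun t _ => ?_
  push_cast
  ring

lemma pochOf_split (p : Polynomial ℂ) (m n : ℕ) (h : n ≤ m) :
    pochOf p m = pochOf p n * pochOf (p + (n : Polynomial ℂ)) (m - n) := by
  conv_lhs => rw [← Nat.add_sub_cancel' h]
  rw [pochOf_add]

lemma C_shift (a : ℂ) (n : ℕ) :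
    (Polynomial.X - Polynomial.C a) + (n : Polynomial ℂ)
      = Polynomial.X + Polynomial.C ((n : ℂ) - a) := by
  rw [← Polynomial.C_eq_natCast, Polynomial.C_sub]
  ring

lemma shift_inner {M : Type*} [CommMonoid M] (f : ℕ → M) (a b : ℕ) :
    ∏ j ∈ Finset.Icc (a + 1) (b + 1), f j = ∏ j ∈ Finset.Icc a b, f (j + 1) := by
  rw [← Finset.map_add_right_Icc a b 1, Finset.prod_map]
  rfl

lemma tri_top {M : Type*} [CommMonoid M] (f : ℕ → ℕ → M) (s : ℕ) :
    ∏ i ∈ Finset.Icc 1 (s + 1), ∏ j ∈ Finset.Icc i (s + 1), f i j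
      = (∏ i ∈ Finset.Icc 1 s, ∏ j ∈ Finset.Icc i s, f i j)
        * ∏ i ∈ Finset.Icc 1 (s + 1), f i (s + 1) := by
  have h1 : ∀ i ∈ Finset.Icc 1 (s + 1),
      ∏ j ∈ Finset.Icc i (s + 1), f i j = (∏ j ∈ Finset.Icc i s, f i j) * f i (s + 1) :=
    fun i hi => Finset.prod_Icc_succ_top (Finset.mem_Icc.mp hi).2 _
  rw [Finset.prod_congr rfl h1, Finset.prod_mul_distrib]
  congr 1
  rw [Finset.prod_Icc_succ_top (by omega : 1 ≤ s + 1),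
    show Finset.Icc (s + 1) s = ∅ from Finset.Icc_eq_empty (by omega), Finset.prod_empty,
    mul_one]

lemma tri_strict {M : Type*} [CommMonoid M] (f : ℕ → ℕ → M) (s : ℕ) :
    ∏ i ∈ Finset.Icc 1 (s + 1), ∏ j ∈ Finset.Icc (i + 1) (s + 1), f i j
      = ∏ i ∈ Finset.Icc 1 (s + 1), ∏ j ∈ Finset.Icc i s, f i (j + 1) :=
  Finset.prod_congr rfl fun i _ => shift_inner (f i) i s

lemma tri_strict_top {M : Type*} [CommMonoid M] (f : ℕ → ℕ → M) (s : ℕ) :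
    ∏ i ∈ Finset.Icc 1 (s + 1 + 1), ∏ j ∈ Finset.Icc (i + 1) (s + 1 + 1), f i j
      = (∏ i ∈ Finset.Icc 1 (s + 1), ∏ j ∈ Finset.Icc i s, f i (j + 1))
        * ∏ i ∈ Finset.Icc 1 (s + 1), f i (s + 1 + 1) := by
  rw [Finset.prod_Icc_succ_top (by omega : 1 ≤ s + 1 + 1),
    show Finset.Icc (s + 1 + 1 + 1) (s + 1 + 1) = ∅ from Finset.Icc_eq_empty (by omega),
    Finset.prod_empty, mul_one]
  have h1 : ∀ i ∈ Finset.Icc 1 (s + 1),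
      ∏ j ∈ Finset.Icc (i + 1) (s + 1 + 1), f i j
        = (∏ j ∈ Finset.Icc i s, f i (j + 1)) * f i (s + 1 + 1) := by
    intro i hi
    have hi2 := (Finset.mem_Icc.mp hi).2
    rw [Finset.prod_Icc_succ_top (by omega : i + 1 ≤ s + 1 + 1), shift_inner]
  rw [Finset.prod_congr rfl h1, Finset.prod_mul_distrib]

lemma outer_drop {M : Type*} [CommMonoid M] (f : ℕ → ℕ → M) (s : ℕ) :
    ∏ i ∈ Finset.Icc 1 (s + 1), ∏ j ∈ Finset.Icc i s, f i j
      = ∏ i ∈ Finset.Icc 1 s, ∏ j ∈ Finset.Icc i s, f i j := by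
  rw [Finset.prod_Icc_succ_top (by omega : 1 ≤ s + 1),
    show Finset.Icc (s + 1) s = ∅ from Finset.Icc_eq_empty (by omega), Finset.prod_empty,
    mul_one]

/-- The inductive step (rank `r` to rank `r−1`) of Theorem 8.4:
`C̃^d(ν,(k₁,…,k_r)) = C̃^d(ν+2k_r,(k₁−k_r,…,k_{r−1}−k_r)) · ∏_{i=1}^r(ν+k_i−1−d(i+r−2)/2)_{k_r}`,
stated as the polynomial identity obtained by cross-multiplying denominators. -/
theorem tensor_const_recursion (d r : ℕ) (hd : 0 < d) (hr : 1 ≤ r)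
    (k : ℕ → ℕ) (hk : ∀ i j, 1 ≤ i → i ≤ j → j ≤ r → k j ≤ k i)
    (hk0 : k (r + 1) = 0) :
    (∏ i ∈ Finset.Icc 1 r, ∏ j ∈ Finset.Icc i r,
        pochOf (Polynomial.X -
          Polynomial.C (1 + (d : ℂ) * ((i : ℂ) + (j : ℂ) - 2) / 2)) (k i + k j)) *
      (∏ i ∈ Finset.Icc 1 r, ∏ j ∈ Finset.Icc (i + 1) r,
        pochOf (Polynomial.X +
          Polynomial.C (2 * (k r : ℂ) - 1 - (d : ℂ) * ((i : ℂ) + (j : ℂ) - 3) / 2))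
          (k i + k j - 2 * k r)) =
    (∏ i ∈ Finset.Icc 1 (r - 1), ∏ j ∈ Finset.Icc i (r - 1),
        pochOf (Polynomial.X +
          Polynomial.C (2 * (k r : ℂ) - 1 - (d : ℂ) * ((i : ℂ) + (j : ℂ) - 2) / 2))
          (k i + k j - 2 * k r)) *
      (∏ i ∈ Finset.Icc 1 r,
        pochOf (Polynomial.X +
          Polynomial.C ((k i : ℂ) - 1 - (d : ℂ) * ((i : ℂ) + (r : ℂ) - 2) / 2)) (k r)) *
      (∏ i ∈ Finset.Icc 1 (r + 1), ∏ j ∈ Finset.Icc (i + 1) (r + 1),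
        pochOf (Polynomial.X -
          Polynomial.C (1 + (d : ℂ) * ((i : ℂ) + (j : ℂ) - 3) / 2)) (k i + k j)) := by
  obtain ⟨s, rfl⟩ : ∃ s, r = s + 1 := ⟨r - 1, by omega⟩
  rw [Nat.add_sub_cancel]
  rw [tri_top, tri_strict, tri_strict_top]
  -- pointwise facts
  have e1 : ∏ i ∈ Finset.Icc 1 (s + 1),
      pochOf (Polynomial.X -
          Polynomial.C (1 + (d : ℂ) * ((i : ℂ) + ((s + 1 : ℕ) : ℂ) - 2) / 2))
        (k i + k (s + 1))
      = (∏ i ∈ Finset.Icc 1 (s + 1),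
          pochOf (Polynomial.X -
              Polynomial.C (1 + (d : ℂ) * ((i : ℂ) + ((s + 1 + 1 : ℕ) : ℂ) - 3) / 2))
            (k i + k (s + 1 + 1)))
        * ∏ i ∈ Finset.Icc 1 (s + 1),
          pochOf (Polynomial.X +
              Polynomial.C ((k i : ℂ) - 1 - (d : ℂ) * ((i : ℂ) + ((s + 1 : ℕ) : ℂ) - 2) / 2))
            (k (s + 1)) := by
    rw [← Finset.prod_mul_distrib]
    refine Finset.prod_congr rfl fun i hi => ?_
    rw [hk0, add_zero, pochOf_add]
    congr 1
    · congr 2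
      push_cast
      ring
    · rw [C_shift]
      congr 2
      push_cast
      ring
  have e2 : ∏ i ∈ Finset.Icc 1 s, ∏ j ∈ Finset.Icc i s,
      pochOf (Polynomial.X -
          Polynomial.C (1 + (d : ℂ) * ((i : ℂ) + (j : ℂ) - 2) / 2)) (k i + k j)
      = (∏ i ∈ Finset.Icc 1 s, ∏ j ∈ Finset.Icc i s,
          pochOf (Polynomial.X -
              Polynomial.C (1 + (d : ℂ) * ((i : ℂ) + (j : ℂ) - 2) / 2)) (2 * k (s + 1)))
        * ∏ i ∈ Finset.Icc 1 s, ∏ j ∈ Finset.Icc i s,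
          pochOf (Polynomial.X +
              Polynomial.C (2 * (k (s + 1) : ℂ) - 1 - (d : ℂ) * ((i : ℂ) + (j : ℂ) - 2) / 2))
            (k i + k j - 2 * k (s + 1)) := by
    rw [← Finset.prod_mul_distrib]
    refine Finset.prod_congr rfl fun i hi => ?_
    rw [← Finset.prod_mul_distrib]
    refine Finset.prod_congr rfl fun j hj => ?_
    obtain ⟨hi1, hi2⟩ := Finset.mem_Icc.mp hi
    obtain ⟨hj1, hj2⟩ := Finset.mem_Icc.mp hj
    have hge : 2 * k (s + 1) ≤ k i + k j := by
      have h1 := hk i (s + 1) hi1 (by omega) le_rfl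
      have h2 := hk j (s + 1) (by omega) (by omega) le_rfl
      omega
    rw [pochOf_split _ _ _ hge]
    congr 1
    rw [C_shift]
    congr 2
    push_cast
    ring
  have e3 : ∏ i ∈ Finset.Icc 1 (s + 1), ∏ j ∈ Finset.Icc i s,
      pochOf (Polynomial.X -
          Polynomial.C (1 + (d : ℂ) * ((i : ℂ) + ((j + 1 : ℕ) : ℂ) - 3) / 2))
        (k i + k (j + 1))
      = (∏ i ∈ Finset.Icc 1 (s + 1), ∏ j ∈ Finset.Icc i s,
          pochOf (Polynomial.X -
              Polynomial.C (1 + (d : ℂ) * ((i : ℂ) + (j : ℂ) - 2) / 2)) (2 * k (s + 1)))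
        * ∏ i ∈ Finset.Icc 1 (s + 1), ∏ j ∈ Finset.Icc i s,
          pochOf (Polynomial.X +
              Polynomial.C (2 * (k (s + 1) : ℂ) - 1
                - (d : ℂ) * ((i : ℂ) + ((j + 1 : ℕ) : ℂ) - 3) / 2))
            (k i + k (j + 1) - 2 * k (s + 1)) := by
    rw [← Finset.prod_mul_distrib]
    refine Finset.prod_congr rfl fun i hi => ?_
    rw [← Finset.prod_mul_distrib]
    refine Finset.prod_congr rfl fun j hj => ?_
    obtain ⟨hi1, hi2⟩ := Finset.mem_Icc.mp hi
    obtain ⟨hj1, hj2⟩ := Finset.mem_Icc.mp hj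
    have hge : 2 * k (s + 1) ≤ k i + k (j + 1) := by
      have h1 := hk i (s + 1) hi1 (by omega) le_rfl
      have h2 := hk (j + 1) (s + 1) (by omega) (by omega) le_rfl
      omega
    rw [pochOf_split _ _ _ hge]
    congr 1
    · congr 2
      push_cast
      ring
    · rw [C_shift]
      congr 2
      push_cast
      ring
  have e4 : ∏ i ∈ Finset.Icc 1 (s + 1), ∏ j ∈ Finset.Icc i s,
      pochOf (Polynomial.X -
          Polynomial.C (1 + (d : ℂ) * ((i : ℂ) + (j : ℂ) - 2) / 2)) (2 * k (s + 1))
      = ∏ i ∈ Finset.Icc 1 s, ∏ j ∈ Finset.Icc i s,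
          pochOf (Polynomial.X -
              Polynomial.C (1 + (d : ℂ) * ((i : ℂ) + (j : ℂ) - 2) / 2)) (2 * k (s + 1)) :=
    outer_drop _ s
  rw [e1, e2, e3, e4]
  ring
end
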